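/- Let ℓ ≤ n and let S_ℓ ≤ S_n be the subgroup of permutations fixing each of ℓ+1,…,n. Then every (S_ℓ,S_ℓ)-double coset in S_n contains an element σ such that every orbit of σ of size at least 2 contains at most one element of {1,…,ℓ}. Moreover this representative is unique up to conjugation by S_ℓ: if σ and σ' both have this property and S_ℓ σ S_ℓ = S_ℓ σ' S_ℓ, then σ' = s σ s⁻¹ for some s ∈ S_ℓ. -/

import Mathlib

open scoped BigOperators Pointwise Classical
open CategoryTheory

/-- For `H ≤ G` and `g ∈ G`, the stabilizer `S(g) = Stab_H(gH) = H ∩ gHg⁻¹`. -/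
def stabCoset {G : Type*} [Group G] (H : Subgroup G) (g : G) : Subgroup G :=
  H ⊓ Subgroup.map (MulAut.conj g).toMonoidHom H

/-- The `m`-th Frobenius–Schur indicator `ν_m(g,χ)` of the simple object of the
group-theoretical fusion category `C(G,H)` attached to `(g,χ)`:
`ν_m(g,χ) = (1/|S(g)|) Σ_{x ∈ H, (gx)^m ∈ H} conj(χ((gx)^m))`
(recall that for `x ∈ H`, `(gx)^m ∈ H` iff `(gx)^m ∈ S(g)`). -/
noncomputable def nuInd {G : Type*} [Group G] (H : Subgroup G) (g : G) (m : ℕ)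
    (χ : ↥(stabCoset H g) → ℂ) : ℂ :=
  (Nat.card ↥(stabCoset H g) : ℂ)⁻¹ *
    ∑ᶠ x : G, if h : x ∈ H ∧ (g * x) ^ m ∈ stabCoset H g
      then (starRingEnd ℂ) (χ ⟨(g * x) ^ m, h.2⟩) else 0

/-- The classical second Frobenius–Schur indicator `ν₂(θ) = (1/|K|) Σ_{x∈K} θ(x²)`. -/
noncomputable def fsInd {K : Type*} [Group K] (θ : K → ℂ) : ℂ :=
  (Nat.card K : ℂ)⁻¹ * ∑ᶠ x : K, θ (x ^ 2)

/-- The copy of `S_ℓ` inside `S_n`: permutations of `{1,…,n}` (0-indexed as `Fin n`)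
fixing each of the points `ℓ+1,…,n` (0-indexed: the points with index `≥ ℓ`). -/
def fixSubgroup (n ℓ : ℕ) : Subgroup (Equiv.Perm (Fin n)) where
  carrier := {σ | ∀ i : Fin n, ℓ ≤ (i : ℕ) → σ i = i}
  one_mem' := fun _ _ => rfl
  mul_mem' := by
    intro a b ha hb i hi
    simp only [Equiv.Perm.mul_apply, hb i hi, ha i hi]
  inv_mem' := by
    intro a ha i hi
    simp only [Set.mem_setOf_eq] at *
    exact (Equiv.symm_apply_eq a).mpr (ha i hi).symm


theorem Equiv.Perm.inv_apply_self {α : Type*} (f : Equiv.Perm α) (x : α) : f⁻¹ (f x) = x :=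
  Equiv.Perm.inv_eq_iff_eq.mpr rfl

theorem Equiv.Perm.apply_inv_self {α : Type*} (f : Equiv.Perm α) (x : α) : f (f⁻¹ x) = x :=
  (Equiv.eq_symm_apply f).mp rfl

namespace Stmt11Aux

variable {n ℓ : ℕ}

/-- "Good" permutations: every nontrivial cycle contains at most one point of `{0,…,ℓ-1}`. -/
def IsGood (n ℓ : ℕ) (σ : Equiv.Perm (Fin n)) : Prop :=
  ∀ i j : Fin n, (i : ℕ) < ℓ → (j : ℕ) < ℓ → σ i ≠ i →
    (∃ k : ℤ, (σ ^ k) i = j) → i = j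

lemma mem_fix_iff {σ : Equiv.Perm (Fin n)} :
    σ ∈ fixSubgroup n ℓ ↔ ∀ i : Fin n, ℓ ≤ (i : ℕ) → σ i = i := Iff.rfl

lemma memH_lt {u : Equiv.Perm (Fin n)} (hu : u ∈ fixSubgroup n ℓ) (y : Fin n)
    (hy : (y : ℕ) < ℓ) : ((u y : Fin n) : ℕ) < ℓ := by
  by_contra h
  push_neg at h
  have h2 := mem_fix_iff.mp (inv_mem hu) (u y) h
  rw [Equiv.Perm.inv_apply_self] at h2
  rw [← h2] at h
  omega

lemma pow_fixed {α : Type*} (g : Equiv.Perm α) (t : α) (h : g t = t) (q : ℕ) :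
    (g ^ q) t = t := by
  induction q with
  | zero => rfl
  | succ q ih => rw [pow_succ, Equiv.Perm.mul_apply, h, ih]

lemma pow_mod_apply {α : Type*} (g : Equiv.Perm α) {p : ℕ} (t : α) (h : (g ^ p) t = t)
    (a : ℕ) : (g ^ a) t = (g ^ (a % p)) t := by
  conv_lhs => rw [← Nat.mod_add_div a p]
  rw [pow_add, Equiv.Perm.mul_apply, pow_mul, pow_fixed _ _ h]

lemma sameCycle_of_mul_swap {g : Equiv.Perm (Fin n)} {i j : Fin n}
    (hij : g.SameCycle i j) {a b : Fin n}
    (h : (g * Equiv.swap i j).SameCycle a b) : g.SameCycle a b := by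
  set g' := g * Equiv.swap i j with hg'
  have step : ∀ z : Fin n, g.SameCycle z (g' z) := by
    intro z
    have hz : g' z = g (Equiv.swap i j z) := rfl
    rcases eq_or_ne z i with rfl | hzi
    · rw [hz, Equiv.swap_apply_left]
      exact hij.trans ⟨1, by simp⟩
    rcases eq_or_ne z j with rfl | hzj
    · rw [hz, Equiv.swap_apply_right]
      exact hij.symm.trans ⟨1, by simp⟩
    · rw [hz, Equiv.swap_apply_of_ne_of_ne hzi hzj]
      exact ⟨1, by simp⟩
  have stepinv : ∀ z : Fin n, g.SameCycle z (g'⁻¹ z) := by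
    intro z
    have := step (g'⁻¹ z)
    rw [Equiv.Perm.apply_inv_self] at this
    exact this.symm
  have main : ∀ k : ℤ, g.SameCycle a ((g' ^ k) a) := by
    intro k
    induction k using Int.induction_on with
    | zero => exact ⟨0, by simp⟩
    | succ k ih =>
      have e : (g' ^ ((k : ℤ) + 1)) a = g' ((g' ^ (k : ℤ)) a) := by
        rw [show ((k : ℤ) + 1) = 1 + (k : ℤ) by ring, zpow_add, zpow_one,
          Equiv.Perm.mul_apply]
      rw [e]
      exact ih.trans (step _)
    | pred k ih =>
      have e : (g' ^ (-(k : ℤ) - 1)) a = g'⁻¹ ((g' ^ (-(k : ℤ))) a) := by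
        rw [show (-(k : ℤ) - 1) = -1 + -(k : ℤ) by ring, zpow_add, zpow_neg_one,
          Equiv.Perm.mul_apply]
      rw [e]
      exact ih.trans (stepinv _)
  obtain ⟨k, hk⟩ := h
  have := main k
  rwa [hk] at this

lemma not_sameCycle_mul_swap {g : Equiv.Perm (Fin n)} {i j : Fin n} (hne : i ≠ j)
    (hij : g.SameCycle i j) : ¬ (g * Equiv.swap i j).SameCycle i j := by
  set g' := g * Equiv.swap i j with hg'
  obtain ⟨m0, -, hm0⟩ := hij.symm.exists_pow_eq'
  have hP : ∃ m, (g ^ m) j = i := ⟨m0, hm0⟩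
  set m := Nat.find hP with hmdef
  have hmspec : (g ^ m) j = i := Nat.find_spec hP
  have hmin : ∀ r < m, (g ^ r) j ≠ i := fun r hr => Nat.find_min hP hr
  have hm1 : 1 ≤ m := by
    rcases Nat.eq_zero_or_pos m with h0 | h
    · exfalso
      rw [h0, pow_zero] at hmspec
      exact hne (by simpa using hmspec.symm)
    · exact h
  have hfix : ∀ k, 1 ≤ k → k < m → (g ^ k) j ≠ j := by
    intro k hk1 hkm hkj
    have := pow_mod_apply g j hkj m
    rw [hmspec] at this
    have hlt : m % k < m := lt_of_lt_of_le (Nat.mod_lt _ (by omega)) hkm.le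
    exact hmin _ hlt this.symm
  have C1 : ∀ d, d + 1 ≤ m → (g' ^ (d + 1)) i = (g ^ (d + 1)) j := by
    intro d
    induction d with
    | zero =>
      intro _
      simp only [zero_add, pow_one, hg', Equiv.Perm.mul_apply, Equiv.swap_apply_left]
    | succ d ih =>
      intro hd
      have ihd := ih (by omega)
      rw [pow_succ' g' (d + 1), Equiv.Perm.mul_apply, ihd]
      have h1 : (g ^ (d + 1)) j ≠ i := hmin _ (by omega)
      have h2 : (g ^ (d + 1)) j ≠ j := hfix _ (by omega) (by omega)
      rw [hg', Equiv.Perm.mul_apply, Equiv.swap_apply_of_ne_of_ne h1 h2,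
        pow_succ' g (d + 1), Equiv.Perm.mul_apply]
  have hfixi : (g' ^ m) i = i := by
    obtain ⟨d, hd⟩ : ∃ d, m = d + 1 := ⟨m - 1, by omega⟩
    rw [hd] at hmspec ⊢
    rw [C1 d (by omega), hmspec]
  rintro ⟨z, hz⟩
  have hsc : g'.SameCycle i j := ⟨z, hz⟩
  obtain ⟨k, -, hk⟩ := hsc.exists_pow_eq'
  rw [pow_mod_apply g' i hfixi k] at hk
  set r := k % m with hr
  have hrm : r < m := Nat.mod_lt _ (by omega)
  rcases Nat.eq_zero_or_pos r with h0 | h1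
  · rw [h0, pow_zero] at hk
    exact hne (by simpa using hk)
  · obtain ⟨d, hd⟩ : ∃ d, r = d + 1 := ⟨r - 1, by omega⟩
    rw [hd] at hk
    rw [C1 d (by omega)] at hk
    exact hfix (d + 1) (by omega) (by omega) hk

end Stmt11Aux

namespace Stmt11Aux

variable {n ℓ : ℕ}

noncomputable def meas (ℓ : ℕ) {n : ℕ} (g : Equiv.Perm (Fin n)) : ℕ :=
  (Finset.univ.filter (fun p : Fin n × Fin n =>
    (p.1 : ℕ) < ℓ ∧ (p.2 : ℕ) < ℓ ∧ p.1 ≠ p.2 ∧ g.SameCycle p.1 p.2)).card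

lemma exists_good (n ℓ : ℕ) (g : Equiv.Perm (Fin n)) :
    ∃ σ : Equiv.Perm (Fin n),
      (∃ a ∈ fixSubgroup n ℓ, ∃ b ∈ fixSubgroup n ℓ, σ = a * g * b) ∧ IsGood n ℓ σ := by
  generalize hN : meas ℓ g = N
  induction N using Nat.strong_induction_on generalizing g with
  | _ N ih =>
  by_cases hgood : IsGood n ℓ g
  · exact ⟨g, ⟨1, one_mem _, 1, one_mem _, by rw [one_mul, mul_one]⟩, hgood⟩
  · rw [IsGood] at hgood
    push_neg at hgood
    obtain ⟨i, j, hi, hj, hmv, hsc, hne⟩ := hgood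
    have hsc' : g.SameCycle i j := hsc
    have hswap : Equiv.swap i j ∈ fixSubgroup n ℓ := by
      intro x hx
      apply Equiv.swap_apply_of_ne_of_ne
      · exact fun h => by rw [h] at hx; omega
      · exact fun h => by rw [h] at hx; omega
    set g₂ := g * Equiv.swap i j with hg₂
    have hlt : meas ℓ g₂ < meas ℓ g := by
      apply Finset.card_lt_card
      constructor
      · intro p hp
        simp only [Finset.mem_filter] at hp ⊢
        exact ⟨hp.1, hp.2.1, hp.2.2.1, hp.2.2.2.1, sameCycle_of_mul_swap hsc' hp.2.2.2.2⟩
      · intro hsub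
        have hmem : (i, j) ∈ Finset.univ.filter (fun p : Fin n × Fin n =>
            (p.1 : ℕ) < ℓ ∧ (p.2 : ℕ) < ℓ ∧ p.1 ≠ p.2 ∧ g.SameCycle p.1 p.2) := by
          simp only [Finset.mem_filter]
          exact ⟨Finset.mem_univ _, hi, hj, hne, hsc'⟩
        have := hsub hmem
        simp only [Finset.mem_filter] at this
        exact not_sameCycle_mul_swap hne hsc' this.2.2.2.2
    obtain ⟨σ, ⟨a, ha, b, hb, hab⟩, hgoodσ⟩ := ih (meas ℓ g₂) (hN ▸ hlt) g₂ rfl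
    refine ⟨σ, ⟨a, ha, Equiv.swap i j * b, mul_mem hswap hb, ?_⟩, hgoodσ⟩
    rw [hab, hg₂]
    group

end Stmt11Aux

namespace Stmt11Aux

variable {n ℓ : ℕ}

/-- The pointwise relation between two permutations in the same double coset. -/
structure CRel (n ℓ : ℕ) (σ σ' : Equiv.Perm (Fin n)) : Prop where
  flt : ∀ x : Fin n, ℓ ≤ (x : ℕ) → ((σ x : Fin n) : ℕ) < ℓ → ((σ' x : Fin n) : ℕ) < ℓ
  fge : ∀ x : Fin n, ℓ ≤ (x : ℕ) → ℓ ≤ ((σ x : Fin n) : ℕ) → σ' x = σ x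
  glt : ∀ y : Fin n, ℓ ≤ (y : ℕ) → ((σ⁻¹ y : Fin n) : ℕ) < ℓ → ((σ'⁻¹ y : Fin n) : ℕ) < ℓ
  gge : ∀ y : Fin n, ℓ ≤ (y : ℕ) → ℓ ≤ ((σ⁻¹ y : Fin n) : ℕ) → σ'⁻¹ y = σ⁻¹ y

lemma rel_of_coset {σ σ' a b : Equiv.Perm (Fin n)} (ha : a ∈ fixSubgroup n ℓ)
    (hb : b ∈ fixSubgroup n ℓ) (h : σ' = a * σ * b) : CRel n ℓ σ σ' := by
  have hfa : ∀ x : Fin n, ℓ ≤ (x : ℕ) → a x = x := ha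
  have hfb : ∀ x : Fin n, ℓ ≤ (x : ℕ) → b x = x := hb
  have hfa' : ∀ x : Fin n, ℓ ≤ (x : ℕ) → a⁻¹ x = x := inv_mem ha
  have hfb' : ∀ x : Fin n, ℓ ≤ (x : ℕ) → b⁻¹ x = x := inv_mem hb
  have happ : ∀ x : Fin n, ℓ ≤ (x : ℕ) → σ' x = a (σ x) := by
    intro x hx
    rw [h, Equiv.Perm.mul_apply, Equiv.Perm.mul_apply, hfb x hx]
  have happ' : ∀ y : Fin n, ℓ ≤ (y : ℕ) → σ'⁻¹ y = b⁻¹ (σ⁻¹ y) := by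
    intro y hy
    rw [h]
    simp only [mul_inv_rev, Equiv.Perm.mul_apply, hfa' y hy]
  constructor
  · intro x hx hlt
    rw [happ x hx]
    exact memH_lt ha _ hlt
  · intro x hx hge
    rw [happ x hx, hfa _ hge]
  · intro y hy hlt
    rw [happ' y hy]
    exact memH_lt (inv_mem hb) _ hlt
  · intro y hy hge
    rw [happ' y hy, hfb' _ hge]

/-- `IsGood` consequence: a moved point below `ℓ` maps outside `{0,…,ℓ-1}`. -/
lemma good_apply_ge {σ : Equiv.Perm (Fin n)} (hN : IsGood n ℓ σ) {x : Fin n}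
    (hx : (x : ℕ) < ℓ) (hmv : σ x ≠ x) : ℓ ≤ ((σ x : Fin n) : ℕ) := by
  by_contra hlt
  push_neg at hlt
  exact hmv (hN x (σ x) hx hlt hmv ⟨1, by simp⟩).symm

lemma good_inv_ge {σ : Equiv.Perm (Fin n)} (hN : IsGood n ℓ σ) {x : Fin n}
    (hx : (x : ℕ) < ℓ) (hmv : σ x ≠ x) : ℓ ≤ ((σ⁻¹ x : Fin n) : ℕ) := by
  by_contra hlt
  push_neg at hlt
  have hne : σ⁻¹ x ≠ x := by
    intro h
    have h2 := congrArg σ h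
    rw [Equiv.Perm.apply_inv_self] at h2
    exact hmv h2.symm
  have hmv' : σ (σ⁻¹ x) ≠ σ⁻¹ x := by
    rw [Equiv.Perm.apply_inv_self]
    exact fun h => hne h.symm
  exact hne (hN (σ⁻¹ x) x hlt hx hmv' ⟨1, by simp⟩)

lemma chain1 {σ : Equiv.Perm (Fin n)} (hN : IsGood n ℓ σ) (t e : Fin n)
    (ht : ℓ ≤ (t : ℕ)) (he : ℓ ≤ (e : ℕ)) (hx : ((σ⁻¹ t : Fin n) : ℕ) < ℓ)
    {m : ℕ} (hm : (σ ^ m) t = e) (hmin : ∀ r < m, (σ ^ r) t ≠ e) :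
    ∀ k ≤ m, ℓ ≤ (((σ ^ k) t : Fin n) : ℕ) := by
  intro k hk
  by_contra hlt
  push_neg at hlt
  rcases eq_or_lt_of_le hk with rfl | hkm
  · rw [hm] at hlt; omega
  · have hmv : σ (σ⁻¹ t) ≠ σ⁻¹ t := by
      rw [Equiv.Perm.apply_inv_self]
      intro hxx
      rw [← hxx] at hx
      omega
    have hsc : ∃ z : ℤ, (σ ^ z) (σ⁻¹ t) = (σ ^ k) t := by
      refine ⟨(k : ℤ) + 1, ?_⟩
      have : ((k : ℤ) + 1) = ((k + 1 : ℕ) : ℤ) := by push_cast; ring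
      rw [this, zpow_natCast, pow_succ, Equiv.Perm.mul_apply, Equiv.Perm.apply_inv_self]
    have heq := hN (σ⁻¹ t) ((σ ^ k) t) hx hlt hmv hsc
    -- σ⁻¹ t = σ^k t  ⇒  σ^(k+1) t = t
    have hper : (σ ^ (k + 1)) t = t := by
      rw [pow_succ', Equiv.Perm.mul_apply, ← heq, Equiv.Perm.apply_inv_self]
    have := pow_mod_apply σ t hper m
    rw [hm] at this
    have hrm : m % (k + 1) < m := lt_of_lt_of_le (Nat.mod_lt _ (by omega)) (by omega)
    exact hmin _ hrm this.symm

lemma chain2 {σ σ' : Equiv.Perm (Fin n)} (hrel : CRel n ℓ σ σ') (t : Fin n) {m : ℕ}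
    (hS : ∀ k ≤ m, ℓ ≤ (((σ ^ k) t : Fin n) : ℕ)) :
    ∀ k ≤ m, (σ' ^ k) t = (σ ^ k) t := by
  intro k
  induction k with
  | zero => intro _; simp
  | succ k ih =>
    intro hk
    rw [pow_succ', Equiv.Perm.mul_apply, ih (by omega)]
    have h1 : ℓ ≤ (((σ ^ k) t : Fin n) : ℕ) := hS k (by omega)
    have h2 : ℓ ≤ ((σ ((σ ^ k) t) : Fin n) : ℕ) := by
      have := hS (k + 1) hk
      rwa [pow_succ', Equiv.Perm.mul_apply] at this
    rw [hrel.fge _ h1 h2, pow_succ', Equiv.Perm.mul_apply]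

lemma chain_aux {σ σ' : Equiv.Perm (Fin n)} (hrel : CRel n ℓ σ σ') (hrel' : CRel n ℓ σ' σ)
    (hN : IsGood n ℓ σ) (hN' : IsGood n ℓ σ')
    (e t t' : Fin n) (he : ℓ ≤ (e : ℕ)) (ht : ℓ ≤ (t : ℕ)) (ht' : ℓ ≤ (t' : ℕ))
    (hxt : ((σ⁻¹ t : Fin n) : ℕ) < ℓ) (hxt' : ((σ'⁻¹ t' : Fin n) : ℕ) < ℓ)
    {m m' : ℕ} (hm : (σ ^ m) t = e) (hminm : ∀ r < m, (σ ^ r) t ≠ e)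
    (hm' : (σ' ^ m') t' = e) (hminm' : ∀ r < m', (σ' ^ r) t' ≠ e)
    (hle : m' ≤ m) : t' = t := by
  have S1 := chain1 hN t e ht he hxt hm hminm
  have S1' := chain1 hN' t' e ht' he hxt' hm' hminm'
  have T' := chain2 hrel' t' S1'
  have hm'2 : (σ ^ m') t' = e := by rw [T' m' le_rfl, hm']
  -- t' = σ^(m-m') t
  have key : (σ ^ m') ((σ ^ (m - m')) t) = (σ ^ m') t' := by
    rw [hm'2, ← Equiv.Perm.mul_apply, ← pow_add]
    rw [show m' + (m - m') = m by omega, hm]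
  have ht'eq : t' = (σ ^ (m - m')) t := ((σ ^ m').injective key).symm
  rcases Nat.eq_zero_or_pos (m - m') with h0 | hpos
  · rw [ht'eq, h0, pow_zero]; rfl
  · exfalso
    have hinv : σ⁻¹ t' = (σ ^ (m - m' - 1)) t := by
      have h1 : σ ((σ ^ (m - m' - 1)) t) = (σ ^ (m - m')) t := by
        rw [← Equiv.Perm.mul_apply, ← pow_succ',
          show m - m' - 1 + 1 = m - m' from by omega]
      rw [ht'eq, ← h1, Equiv.Perm.inv_apply_self]
    have hge : ℓ ≤ ((σ⁻¹ t' : Fin n) : ℕ) := by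
      rw [hinv]; exact S1 _ (by omega)
    have := hrel'.glt t' ht' hxt'
    omega

lemma crux {σ σ' : Equiv.Perm (Fin n)} (hrel : CRel n ℓ σ σ') (hrel' : CRel n ℓ σ' σ)
    (hN : IsGood n ℓ σ) (hN' : IsGood n ℓ σ')
    (e : Fin n) (he : ℓ ≤ (e : ℕ)) (hxe : ((σ e : Fin n) : ℕ) < ℓ) :
    σ' (σ' e) = σ (σ e) := by
  have hxmv : σ (σ e) ≠ σ e := by
    intro h
    have := σ.injective h
    rw [this] at hxe; omega
  have hx'lt : ((σ' e : Fin n) : ℕ) < ℓ := hrel.flt e he hxe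
  have hx'mv : σ' (σ' e) ≠ σ' e := by
    intro h
    have := σ'.injective h
    rw [this] at hx'lt; omega
  set t := σ (σ e) with htdef
  set t' := σ' (σ' e) with ht'def
  have ht : ℓ ≤ (t : ℕ) := good_apply_ge hN hxe hxmv
  have ht' : ℓ ≤ (t' : ℕ) := good_apply_ge hN' hx'lt hx'mv
  have hxt : ((σ⁻¹ t : Fin n) : ℕ) < ℓ := by
    rw [htdef, Equiv.Perm.inv_apply_self]; exact hxe
  have hxt' : ((σ'⁻¹ t' : Fin n) : ℕ) < ℓ := by
    rw [ht'def, Equiv.Perm.inv_apply_self]; exact hx'lt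
  have hsc : σ.SameCycle t e := by
    refine Equiv.Perm.SameCycle.symm ⟨2, ?_⟩
    rw [show (2 : ℤ) = ((2 : ℕ) : ℤ) by norm_num, zpow_natCast]
    rw [htdef, pow_succ, pow_one, Equiv.Perm.mul_apply]
  obtain ⟨k0, -, hk0⟩ := hsc.exists_pow_eq'
  have hP : ∃ k, (σ ^ k) t = e := ⟨k0, hk0⟩
  have hm : (σ ^ Nat.find hP) t = e := Nat.find_spec hP
  have hminm : ∀ r < Nat.find hP, (σ ^ r) t ≠ e := fun r hr => Nat.find_min hP hr
  have hsc' : σ'.SameCycle t' e := by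
    refine Equiv.Perm.SameCycle.symm ⟨2, ?_⟩
    rw [show (2 : ℤ) = ((2 : ℕ) : ℤ) by norm_num, zpow_natCast]
    rw [ht'def, pow_succ, pow_one, Equiv.Perm.mul_apply]
  obtain ⟨k1, -, hk1⟩ := hsc'.exists_pow_eq'
  have hP' : ∃ k, (σ' ^ k) t' = e := ⟨k1, hk1⟩
  have hm' : (σ' ^ Nat.find hP') t' = e := Nat.find_spec hP'
  have hminm' : ∀ r < Nat.find hP', (σ' ^ r) t' ≠ e := fun r hr => Nat.find_min hP' hr
  rcases le_total (Nat.find hP') (Nat.find hP) with hle | hle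
  · exact chain_aux hrel hrel' hN hN' e t t' he ht ht' hxt hxt' hm hminm hm' hminm' hle
  · exact (chain_aux hrel' hrel hN' hN e t' t he ht' ht hxt' hxt hm' hminm' hm hminm hle).symm

end Stmt11Aux

namespace Stmt11Aux

variable {n ℓ : ℕ}

lemma moved_map {σ σ' : Equiv.Perm (Fin n)} (hrel : CRel n ℓ σ σ') (hN : IsGood n ℓ σ)
    {x : Fin n} (hx : (x : ℕ) < ℓ) (hmv : σ x ≠ x) :
    ((σ' (σ⁻¹ x) : Fin n) : ℕ) < ℓ ∧ σ' (σ' (σ⁻¹ x)) ≠ σ' (σ⁻¹ x) := by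
  have he : ℓ ≤ ((σ⁻¹ x : Fin n) : ℕ) := good_inv_ge hN hx hmv
  have hval : ((σ (σ⁻¹ x) : Fin n) : ℕ) < ℓ := by
    rw [Equiv.Perm.apply_inv_self]; exact hx
  have h1 : ((σ' (σ⁻¹ x) : Fin n) : ℕ) < ℓ := hrel.flt _ he hval
  refine ⟨h1, ?_⟩
  intro hfix
  have h2 := σ'.injective hfix
  rw [h2] at h1
  omega

lemma card_moved {σ σ' : Equiv.Perm (Fin n)} (hrel : CRel n ℓ σ σ') (hrel' : CRel n ℓ σ' σ)
    (hN : IsGood n ℓ σ) (hN' : IsGood n ℓ σ') :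
    (Finset.univ.filter fun x : Fin n => (x : ℕ) < ℓ ∧ σ x ≠ x).card =
    (Finset.univ.filter fun x : Fin n => (x : ℕ) < ℓ ∧ σ' x ≠ x).card := by
  apply Finset.card_bij (fun x _ => σ' (σ⁻¹ x))
  · intro x hx
    simp only [Finset.mem_filter, Finset.mem_univ, true_and] at hx ⊢
    exact moved_map hrel hN hx.1 hx.2
  · intro a _ b _ h
    exact σ⁻¹.injective (σ'.injective h)
  · intro y hy
    simp only [Finset.mem_filter, Finset.mem_univ, true_and] at hy
    refine ⟨σ (σ'⁻¹ y), ?_, ?_⟩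
    · simp only [Finset.mem_filter, Finset.mem_univ, true_and]
      have := moved_map hrel' hN' hy.1 hy.2
      have he : ℓ ≤ ((σ'⁻¹ y : Fin n) : ℕ) := good_inv_ge hN' hy.1 hy.2
      have hval : ((σ' (σ'⁻¹ y) : Fin n) : ℕ) < ℓ := by
        rw [Equiv.Perm.apply_inv_self]; exact hy.1
      have h1 : ((σ (σ'⁻¹ y) : Fin n) : ℕ) < ℓ := hrel'.flt _ he hval
      refine ⟨h1, ?_⟩
      intro hfix
      have h2 := σ.injective hfix
      rw [h2] at h1
      omega
    · rw [Equiv.Perm.inv_apply_self, Equiv.Perm.apply_inv_self]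

lemma card_fixed {σ σ' : Equiv.Perm (Fin n)} (hrel : CRel n ℓ σ σ') (hrel' : CRel n ℓ σ' σ)
    (hN : IsGood n ℓ σ) (hN' : IsGood n ℓ σ') :
    (Finset.univ.filter fun x : Fin n => (x : ℕ) < ℓ ∧ σ x = x).card =
    (Finset.univ.filter fun x : Fin n => (x : ℕ) < ℓ ∧ σ' x = x).card := by
  have h1 := Finset.card_filter_add_card_filter_not
      (s := Finset.univ.filter (fun x : Fin n => (x : ℕ) < ℓ)) (p := fun x => σ x = x)
  have h2 := Finset.card_filter_add_card_filter_not
      (s := Finset.univ.filter (fun x : Fin n => (x : ℕ) < ℓ)) (p := fun x => σ' x = x)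
  rw [Finset.filter_filter, Finset.filter_filter] at h1 h2
  have e1 : (Finset.univ.filter fun x : Fin n => (x : ℕ) < ℓ ∧ ¬ σ x = x)
      = Finset.univ.filter fun x : Fin n => (x : ℕ) < ℓ ∧ σ x ≠ x :=
    Finset.filter_congr (fun x _ => Iff.rfl)
  have e2 : (Finset.univ.filter fun x : Fin n => (x : ℕ) < ℓ ∧ ¬ σ' x = x)
      = Finset.univ.filter fun x : Fin n => (x : ℕ) < ℓ ∧ σ' x ≠ x :=
    Finset.filter_congr (fun x _ => Iff.rfl)
  rw [e1] at h1
  rw [e2] at h2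
  have hmv := card_moved hrel hrel' hN hN'
  omega

lemma build_s {σ σ' : Equiv.Perm (Fin n)} (hrel : CRel n ℓ σ σ') (hrel' : CRel n ℓ σ' σ)
    (hN : IsGood n ℓ σ) (hN' : IsGood n ℓ σ') :
    ∃ s ∈ fixSubgroup n ℓ, σ' = s * σ * s⁻¹ := by
  have hcard := card_fixed hrel hrel' hN hN'
  set eqv := Finset.equivOfCardEq hcard with heqv
  set f : Fin n → Fin n := fun x =>
    if h : (x : ℕ) < ℓ ∧ σ x = x then
      (eqv ⟨x, Finset.mem_filter.mpr ⟨Finset.mem_univ x, h⟩⟩ : Fin n)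
    else if (x : ℕ) < ℓ then σ' (σ⁻¹ x) else x with hf
  have hfF : ∀ x : Fin n, ℓ ≤ (x : ℕ) → f x = x := by
    intro x hx
    rw [hf]
    simp only
    rw [dif_neg (fun h => absurd h.1 (by omega)), if_neg (by omega)]
  have hfFixEq : ∀ (x : Fin n) (h : (x : ℕ) < ℓ ∧ σ x = x),
      f x = (eqv ⟨x, Finset.mem_filter.mpr ⟨Finset.mem_univ x, h⟩⟩ : Fin n) := by
    intro x h
    rw [hf]
    simp only
    rw [dif_pos h]
  have hfFix : ∀ (x : Fin n), ((x : ℕ) < ℓ ∧ σ x = x) →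
      ((f x : Fin n) : ℕ) < ℓ ∧ σ' (f x) = f x := by
    intro x h
    have hmem := (eqv ⟨x, Finset.mem_filter.mpr ⟨Finset.mem_univ x, h⟩⟩).2
    rw [Finset.mem_filter] at hmem
    rw [hfFixEq x h]
    exact hmem.2
  have hfMov : ∀ x : Fin n, (x : ℕ) < ℓ → σ x ≠ x → f x = σ' (σ⁻¹ x) := by
    intro x hx hmv
    rw [hf]
    simp only
    rw [dif_neg (fun h => hmv h.2), if_pos hx]
  have tri : ∀ x : Fin n, ℓ ≤ (x : ℕ) ∨ ((x : ℕ) < ℓ ∧ σ x = x) ∨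
      ((x : ℕ) < ℓ ∧ σ x ≠ x) := by
    intro x
    by_cases h1 : ℓ ≤ (x : ℕ)
    · exact Or.inl h1
    · by_cases h2 : σ x = x
      · exact Or.inr (Or.inl ⟨by omega, h2⟩)
      · exact Or.inr (Or.inr ⟨by omega, h2⟩)
  have hinj : Function.Injective f := by
    intro x y hxy
    rcases tri x with hx | hx | hx <;> rcases tri y with hy | hy | hy
    · rw [hfF x hx, hfF y hy] at hxy; exact hxy
    · exfalso
      rw [hfF x hx] at hxy
      have := (hfFix y hy).1
      rw [← hxy] at this
      omega
    · exfalso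
      rw [hfF x hx] at hxy
      have := (moved_map hrel hN hy.1 hy.2).1
      rw [← hfMov y hy.1 hy.2, ← hxy] at this
      omega
    · exfalso
      rw [hfF y hy] at hxy
      have := (hfFix x hx).1
      rw [hxy] at this
      omega
    · -- both fixed
      have h1 := hfFixEq x hx
      have h2 := hfFixEq y hy
      rw [h1, h2] at hxy
      have := eqv.injective (Subtype.ext hxy)
      exact congrArg Subtype.val this
    · exfalso
      have h1 := (hfFix x hx).2
      have h2 := (moved_map hrel hN hy.1 hy.2).2
      rw [← hfMov y hy.1 hy.2] at h2
      rw [hxy] at h1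
      exact h2 h1
    · exfalso
      rw [hfF y hy] at hxy
      have := (moved_map hrel hN hx.1 hx.2).1
      rw [← hfMov x hx.1 hx.2, hxy] at this
      omega
    · exfalso
      have h1 := (hfFix y hy).2
      have h2 := (moved_map hrel hN hx.1 hx.2).2
      rw [← hfMov x hx.1 hx.2] at h2
      rw [← hxy] at h1
      exact h2 h1
    · rw [hfMov x hx.1 hx.2, hfMov y hy.1 hy.2] at hxy
      exact σ⁻¹.injective (σ'.injective hxy)
  have hbij : Function.Bijective f := Finite.injective_iff_bijective.mp hinj
  refine ⟨Equiv.ofBijective f hbij, ?_, ?_⟩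
  · intro x hx
    exact hfF x hx
  · have hcomm : ∀ x, σ' ((Equiv.ofBijective f hbij) x) = (Equiv.ofBijective f hbij) (σ x) := by
      intro x
      show σ' (f x) = f (σ x)
      rcases tri x with hx | hx | hx
      · rw [hfF x hx]
        by_cases hsx : ℓ ≤ ((σ x : Fin n) : ℕ)
        · rw [hfF _ hsx]
          exact hrel.fge x hx hsx
        · push_neg at hsx
          have hmvsx : σ (σ x) ≠ σ x := by
            intro h
            have := σ.injective h
            rw [this] at hsx
            omega
          rw [hfMov _ hsx hmvsx, Equiv.Perm.inv_apply_self]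
      · rw [hx.2, (hfFix x hx).2]
      · rw [hfMov x hx.1 hx.2]
        have hsx : ℓ ≤ ((σ x : Fin n) : ℕ) := good_apply_ge hN hx.1 hx.2
        rw [hfF _ hsx]
        have he : ℓ ≤ ((σ⁻¹ x : Fin n) : ℕ) := good_inv_ge hN hx.1 hx.2
        have hxe : ((σ (σ⁻¹ x) : Fin n) : ℕ) < ℓ := by
          rw [Equiv.Perm.apply_inv_self]; exact hx.1
        have hcx := crux hrel hrel' hN hN' (σ⁻¹ x) he hxe
        rw [Equiv.Perm.apply_inv_self] at hcx
        exact hcx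
    have hcomm_eq : σ' * (Equiv.ofBijective f hbij) = (Equiv.ofBijective f hbij) * σ :=
      Equiv.ext fun x => hcomm x
    exact eq_mul_inv_iff_mul_eq.mpr hcomm_eq

end Stmt11Aux

/-- Every `(S_ℓ,S_ℓ)`-double coset in `S_n` contains an element `σ` such that every orbit of
`σ` of size at least 2 contains at most one element of `{1,…,ℓ}` (0-indexed: index `< ℓ`);
moreover such a representative is unique up to conjugation by an element of `S_ℓ`. -/
theorem stmt_11 (n ℓ : ℕ) (hl : ℓ ≤ n) :
    (∀ g : Equiv.Perm (Fin n), ∃ σ : Equiv.Perm (Fin n),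
      (∃ a ∈ fixSubgroup n ℓ, ∃ b ∈ fixSubgroup n ℓ, σ = a * g * b) ∧
      (∀ i j : Fin n, (i : ℕ) < ℓ → (j : ℕ) < ℓ → σ i ≠ i →
        (∃ k : ℤ, (σ ^ k) i = j) → i = j)) ∧
    (∀ σ σ' : Equiv.Perm (Fin n),
      (∀ i j : Fin n, (i : ℕ) < ℓ → (j : ℕ) < ℓ → σ i ≠ i →
        (∃ k : ℤ, (σ ^ k) i = j) → i = j) →
      (∀ i j : Fin n, (i : ℕ) < ℓ → (j : ℕ) < ℓ → σ' i ≠ i →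
        (∃ k : ℤ, (σ' ^ k) i = j) → i = j) →
      {x : Equiv.Perm (Fin n) | ∃ a ∈ fixSubgroup n ℓ, ∃ b ∈ fixSubgroup n ℓ, x = a * σ * b} =
        {x : Equiv.Perm (Fin n) |
          ∃ a ∈ fixSubgroup n ℓ, ∃ b ∈ fixSubgroup n ℓ, x = a * σ' * b} →
      ∃ s ∈ fixSubgroup n ℓ, σ' = s * σ * s⁻¹) := by
  constructor
  · intro g
    obtain ⟨σ, hco, hgood⟩ := Stmt11Aux.exists_good n ℓ g
    exact ⟨σ, hco, hgood⟩
  · intro σ σ' hN hN' hsets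
    have hmem : σ' ∈ {x : Equiv.Perm (Fin n) |
        ∃ a ∈ fixSubgroup n ℓ, ∃ b ∈ fixSubgroup n ℓ, x = a * σ * b} := by
      rw [hsets]
      exact ⟨1, one_mem _, 1, one_mem _, by rw [one_mul, mul_one]⟩
    obtain ⟨a, ha, b, hb, hab⟩ := hmem
    have hrel := Stmt11Aux.rel_of_coset ha hb hab
    have hab' : σ = a⁻¹ * σ' * b⁻¹ := by rw [hab]; group
    have hrel' := Stmt11Aux.rel_of_coset (inv_mem ha) (inv_mem hb) hab'
    exact Stmt11Aux.build_s hrel hrel' hN hN'
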